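/- Let R, M, c > 0, and let f, g be holomorphic on {|z| ≤ R} with |f|, |g| ≤ M, f(0) = g(0) = 0, f'(0) = g'(0) = c, and suppose |f(z) − g(z)| < ε for all |z| < R. Then there exist ρ > 0 and C > 0 depending only on R, M, c (not on f, g, ε) such that the inverse functions f⁻¹ and g⁻¹ are defined and univalent on {|ζ| ≤ ρ} and max_{|ζ| ≤ ρ} |f⁻¹(ζ) − g⁻¹(ζ)| ≤ C·ε. -/

import Mathlib

open Metric

noncomputable def stmt9D (R M c : ℝ) : ℝ := (M + c*R)/(R/2)
noncomputable def stmt9B (R M c : ℝ) : ℝ := (stmt9D R M c + 1)/(R/2)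
noncomputable def stmt9r (R M c : ℝ) : ℝ := min (R/4) (c / (2 * stmt9B R M c))

lemma stmt9B_pos {R M c : ℝ} (hR : 0 < R) (hM : 0 < M) (hc : 0 < c) :
    0 < stmt9B R M c := by
  have hD : 0 < stmt9D R M c := div_pos (by positivity) (by positivity)
  exact div_pos (by linarith) (by positivity)

lemma stmt9r_pos {R M c : ℝ} (hR : 0 < R) (hM : 0 < M) (hc : 0 < c) :
    0 < stmt9r R M c := by
  have hB := stmt9B_pos hR hM hc
  exact lt_min (by positivity) (by positivity)

/-- The key Lipschitz estimate for `h z = f z - c z` on the small ball. -/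
lemma stmt9_lip (R M c : ℝ) (hR : 0 < R) (hM : 0 < M) (hc : 0 < c) (f : ℂ → ℂ)
    (hf : DifferentiableOn ℂ f (closedBall (0:ℂ) R))
    (hfM : ∀ z ∈ closedBall (0:ℂ) R, ‖f z‖ ≤ M)
    (hfd : deriv f 0 = (c : ℂ)) :
    ∀ z₁ ∈ closedBall (0:ℂ) (stmt9r R M c), ∀ z₂ ∈ closedBall (0:ℂ) (stmt9r R M c),
      ‖(f z₁ - c*z₁) - (f z₂ - c*z₂)‖ ≤ c/2 * ‖z₁ - z₂‖ := by
  have hB := stmt9B_pos hR hM hc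
  have hr := stmt9r_pos hR hM hc
  set D := stmt9D R M c with hDdef
  set B := stmt9B R M c with hBdef
  set r := stmt9r R M c with hrdef
  set h : ℂ → ℂ := fun z => f z - c*z with hhdef
  have hh : DifferentiableOn ℂ h (closedBall (0:ℂ) R) :=
    hf.sub (differentiable_id.const_mul _).differentiableOn
  -- differentiability of h at interior points
  have hda : ∀ z ∈ ball (0:ℂ) R, DifferentiableAt ℂ h z := by
    intro z hz
    exact hh.differentiableAt
      (mem_nhds_iff.2 ⟨ball 0 R, ball_subset_closedBall, isOpen_ball, hz⟩)
  have hfa : ∀ z ∈ ball (0:ℂ) R, DifferentiableAt ℂ f z := by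
    intro z hz
    exact hf.differentiableAt
      (mem_nhds_iff.2 ⟨ball 0 R, ball_subset_closedBall, isOpen_ball, hz⟩)
  -- deriv h 0 = 0
  have h0R : (0:ℂ) ∈ ball (0:ℂ) R := by simpa using hR
  have hderiv0 : deriv h 0 = 0 := by
    have h1 : HasDerivAt (fun z : ℂ => (c:ℂ)*z) (c:ℂ) 0 := by
      simpa using (hasDerivAt_id (0:ℂ)).const_mul (c:ℂ)
    have h2 : HasDerivAt f (deriv f 0) 0 := (hfa 0 h0R).hasDerivAt
    have : HasDerivAt h (deriv f 0 - c) 0 := h2.sub h1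
    rw [this.deriv, hfd, sub_self]
  -- Cauchy-type estimate: ‖deriv h z‖ ≤ D on the half ball
  have hD : ∀ z ∈ ball (0:ℂ) (R/2), ‖deriv h z‖ ≤ D := by
    intro z hz
    have hzn : ‖z‖ < R/2 := by simpa using hz
    have hdc : DiffContOnCl ℂ h (ball z (R/2)) := by
      apply DifferentiableOn.diffContOnCl
      rw [closure_ball z (by positivity : (R/2 : ℝ) ≠ 0)]
      refine hh.mono (closedBall_subset_closedBall' ?_)
      simp only [dist_zero_right]
      linarith
    have hsph : ∀ w ∈ sphere z (R/2), ‖h w‖ ≤ M + c*R := by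
      intro w hw
      have hdw : dist w z = R/2 := hw
      have hwn : ‖w‖ ≤ R := by
        calc ‖w‖ = ‖w - z + z‖ := by ring_nf
          _ ≤ ‖w - z‖ + ‖z‖ := norm_add_le _ _
          _ ≤ R/2 + R/2 := by
              rw [← dist_eq_norm]
              exact add_le_add (le_of_eq hdw) hzn.le
          _ = R := by ring
      have hwR : w ∈ closedBall (0:ℂ) R := by simpa using hwn
      have h2 : ‖(c:ℂ)*w‖ ≤ c*R := by
        rw [norm_mul, Complex.norm_real, Real.norm_of_nonneg hc.le]
        exact mul_le_mul_of_nonneg_left hwn hc.le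
      calc ‖h w‖ ≤ ‖f w‖ + ‖(c:ℂ)*w‖ := norm_sub_le _ _
        _ ≤ M + c*R := add_le_add (hfM w hwR) h2
    have := Complex.norm_deriv_le_of_forall_mem_sphere_norm_le (half_pos hR) hdc hsph
    simpa [hDdef, stmt9D] using this
  -- deriv h is differentiable on the half ball
  have hdd : DifferentiableOn ℂ (deriv h) (ball (0:ℂ) (R/2)) := by
    have h1 : AnalyticOnNhd ℂ h (ball (0:ℂ) R) :=
      (hh.mono ball_subset_closedBall).analyticOnNhd isOpen_ball
    exact (h1.deriv.differentiableOn).mono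
      (ball_subset_ball (by linarith))
  -- Schwarz: ‖deriv h z‖ ≤ B * ‖z‖
  have hSch : ∀ z ∈ ball (0:ℂ) (R/2), ‖deriv h z‖ ≤ B * ‖z‖ := by
    intro z hz
    have hmaps : Set.MapsTo (deriv h) (ball (0:ℂ) (R/2)) (ball (deriv h 0) (D+1)) := by
      intro w hw
      rw [hderiv0, mem_ball, dist_zero_right]
      exact lt_of_le_of_lt (hD w hw) (by linarith)
    have := Complex.dist_le_div_mul_dist_of_mapsTo_ball hdd (hmaps.mono_right ball_subset_closedBall) hz
    rw [hderiv0, dist_zero_right, dist_zero_right] at this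
    simpa [hBdef, stmt9B, div_div] using this
  -- bound on deriv h on the small closed ball
  have hsmall : ∀ z ∈ closedBall (0:ℂ) r, ‖deriv h z‖ ≤ c/2 := by
    intro z hz
    have hzr : ‖z‖ ≤ r := by simpa using hz
    have hz2 : z ∈ ball (0:ℂ) (R/2) := by
      simp only [mem_ball, dist_zero_right]
      have : r ≤ R/4 := min_le_left _ _
      linarith
    calc ‖deriv h z‖ ≤ B * ‖z‖ := hSch z hz2
      _ ≤ B * (c / (2*B)) := by
          apply mul_le_mul_of_nonneg_left _ hB.le
          exact le_trans hzr (min_le_right _ _)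
      _ = c/2 := by field_simp
  -- mean value inequality
  intro z₁ hz₁ z₂ hz₂
  have hconv : Convex ℝ (closedBall (0:ℂ) r) := convex_closedBall _ _
  have hsub : closedBall (0:ℂ) r ⊆ ball (0:ℂ) R := by
    intro z hz
    simp only [mem_ball, dist_zero_right]
    have : ‖z‖ ≤ r := by simpa using hz
    have : r ≤ R/4 := min_le_left _ _
    simp only [mem_closedBall, dist_zero_right] at hz
    linarith
  have key := hconv.norm_image_sub_le_of_norm_hasFDerivWithin_le
    (f := h) (f' := fun z => ContinuousLinearMap.smulRight (1 : ℂ →L[ℂ] ℂ) (deriv h z))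
    (C := c/2) (fun z hz => ((hda z (hsub hz)).hasDerivAt.hasFDerivAt).hasFDerivWithinAt)
    (fun z hz => by
      rw [ContinuousLinearMap.norm_smulRight_apply]
      simpa [norm_one] using hsmall z hz)
    hz₂ hz₁
  simpa [hhdef] using key

/-- Existence of a preimage via the Banach fixed point theorem. -/
lemma stmt9_fix {c r : ℝ} (hc : 0 < c) (hr : 0 < r) (h : ℂ → ℂ)
    (hlip : ∀ z₁ ∈ closedBall (0:ℂ) r, ∀ z₂ ∈ closedBall (0:ℂ) r,
      ‖h z₁ - h z₂‖ ≤ c/2 * ‖z₁ - z₂‖)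
    (h0 : h 0 = 0) (ζ : ℂ) (hζ : ‖ζ‖ ≤ c*r/2) :
    ∃ z ∈ closedBall (0:ℂ) r, (c:ℂ)*z + h z = ζ := by
  have h0r : (0:ℂ) ∈ closedBall (0:ℂ) r := by simpa using hr.le
  have hcne : (c:ℂ) ≠ 0 := by exact_mod_cast hc.ne'
  have hcnorm : ‖(c:ℂ)‖ = c := by
    rw [Complex.norm_real, Real.norm_of_nonneg hc.le]
  -- bound ‖h z‖ on the ball
  have hhb : ∀ z ∈ closedBall (0:ℂ) r, ‖h z‖ ≤ c*r/2 := by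
    intro z hz
    have := hlip z hz 0 h0r
    rw [h0, sub_zero, sub_zero] at this
    have hzr : ‖z‖ ≤ r := by simpa using hz
    calc ‖h z‖ ≤ c/2 * ‖z‖ := this
      _ ≤ c/2 * r := mul_le_mul_of_nonneg_left hzr (by positivity)
      _ = c*r/2 := by ring
  haveI : Nonempty (closedBall (0:ℂ) r) := ⟨⟨0, h0r⟩⟩
  haveI : CompleteSpace (closedBall (0:ℂ) r) := isClosed_closedBall.completeSpace_coe
  set Φ : closedBall (0:ℂ) r → closedBall (0:ℂ) r := fun z =>
    ⟨(ζ - h z)/(c:ℂ), by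
      have hz : (z : ℂ) ∈ closedBall (0:ℂ) r := z.2
      have : ‖(ζ - h z)/(c:ℂ)‖ ≤ r := by
        rw [norm_div, hcnorm, div_le_iff₀ hc]
        calc ‖ζ - h (z:ℂ)‖ ≤ ‖ζ‖ + ‖h (z:ℂ)‖ := norm_sub_le _ _
          _ ≤ c*r/2 + c*r/2 := add_le_add hζ (hhb _ hz)
          _ = r * c := by ring
      simpa using this⟩ with hΦdef
  have hcontract : ContractingWith (1/2 : NNReal) Φ := by
    constructor
    · rw [← NNReal.coe_lt_coe]; norm_num
    · apply LipschitzWith.of_dist_le_mul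
      intro x y
      rw [Subtype.dist_eq, Subtype.dist_eq]
      simp only [hΦdef]
      rw [dist_eq_norm, dist_eq_norm, div_sub_div_same, norm_div, hcnorm]
      have : ζ - h (x:ℂ) - (ζ - h (y:ℂ)) = h (y:ℂ) - h (x:ℂ) := by ring
      rw [this, div_le_iff₀ hc]
      have hlb := hlip (y:ℂ) y.2 (x:ℂ) x.2
      have hcoe : ((1/2 : NNReal) : ℝ) = 1/2 := by norm_num
      rw [hcoe]
      calc ‖h (y:ℂ) - h (x:ℂ)‖ ≤ c/2 * ‖(y:ℂ) - (x:ℂ)‖ := hlb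
        _ = 1/2 * ‖(x:ℂ) - (y:ℂ)‖ * c := by rw [norm_sub_rev]; ring
  set z := ContractingWith.fixedPoint Φ hcontract with hzdef
  have hfix : Φ z = z := hcontract.fixedPoint_isFixedPt
  refine ⟨(z : ℂ), z.2, ?_⟩
  have : ((Φ z : closedBall (0:ℂ) r) : ℂ) = (z : ℂ) := by rw [hfix]
  simp only [hΦdef] at this
  field_simp at this
  linear_combination -this

theorem stmt_9 (R M c : ℝ) (hR : 0 < R) (hM : 0 < M) (hc : 0 < c) :
    ∃ ρ > 0, ∃ C > 0, ∀ (f g : ℂ → ℂ) (ε : ℝ), 0 < ε →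
      DifferentiableOn ℂ f (closedBall (0:ℂ) R) →
      DifferentiableOn ℂ g (closedBall (0:ℂ) R) →
      (∀ z ∈ closedBall (0:ℂ) R, ‖f z‖ ≤ M) →
      (∀ z ∈ closedBall (0:ℂ) R, ‖g z‖ ≤ M) →
      f 0 = 0 → g 0 = 0 → deriv f 0 = (c : ℂ) → deriv g 0 = (c : ℂ) →
      (∀ z ∈ ball (0:ℂ) R, ‖f z - g z‖ < ε) →
      ∃ F G : ℂ → ℂ,
        (∀ ζ ∈ closedBall (0:ℂ) ρ, f (F ζ) = ζ ∧ g (G ζ) = ζ) ∧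
        Set.InjOn F (closedBall (0:ℂ) ρ) ∧
        Set.InjOn G (closedBall (0:ℂ) ρ) ∧
        ∀ ζ ∈ closedBall (0:ℂ) ρ, ‖F ζ - G ζ‖ ≤ C * ε := by
  have hr := stmt9r_pos hR hM hc
  set r := stmt9r R M c with hrdef
  refine ⟨c*r/2, by positivity, 2/c, by positivity, ?_⟩
  intro f g ε hε hf hg hfM hgM hf0 hg0 hfd hgd hfg
  have hlipf := stmt9_lip R M c hR hM hc f hf hfM hfd
  have hlipg := stmt9_lip R M c hR hM hc g hg hgM hgd
  have hsubR : closedBall (0:ℂ) r ⊆ ball (0:ℂ) R := by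
    intro z hz
    simp only [mem_ball, dist_zero_right]
    simp only [mem_closedBall, dist_zero_right] at hz
    have : r ≤ R/4 := min_le_left _ _
    linarith
  -- existence of preimages
  have hexf : ∀ ζ : ℂ, ∃ z, ζ ∈ closedBall (0:ℂ) (c*r/2) →
      z ∈ closedBall (0:ℂ) r ∧ f z = ζ := by
    intro ζ
    by_cases hζ : ζ ∈ closedBall (0:ℂ) (c*r/2)
    · have hζn : ‖ζ‖ ≤ c*r/2 := by simpa using hζ
      obtain ⟨z, hz, hfz⟩ := stmt9_fix hc hr (fun z => f z - c*z)
        (fun a ha b hb => hlipf a ha b hb) (by simp [hf0]) ζ hζn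
      exact ⟨z, fun _ => ⟨hz, by linear_combination hfz⟩⟩
    · exact ⟨0, fun h => absurd h hζ⟩
  have hexg : ∀ ζ : ℂ, ∃ z, ζ ∈ closedBall (0:ℂ) (c*r/2) →
      z ∈ closedBall (0:ℂ) r ∧ g z = ζ := by
    intro ζ
    by_cases hζ : ζ ∈ closedBall (0:ℂ) (c*r/2)
    · have hζn : ‖ζ‖ ≤ c*r/2 := by simpa using hζ
      obtain ⟨z, hz, hgz⟩ := stmt9_fix hc hr (fun z => g z - c*z)
        (fun a ha b hb => hlipg a ha b hb) (by simp [hg0]) ζ hζn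
      exact ⟨z, fun _ => ⟨hz, by linear_combination hgz⟩⟩
    · exact ⟨0, fun h => absurd h hζ⟩
  choose F hF using hexf
  choose G hG using hexg
  refine ⟨F, G, ?_, ?_, ?_, ?_⟩
  · intro ζ hζ
    exact ⟨(hF ζ hζ).2, (hG ζ hζ).2⟩
  · intro a ha b hb hab
    have h1 : f (F a) = a := (hF a ha).2
    have h2 : f (F b) = b := (hF b hb).2
    rw [← h1, ← h2, hab]
  · intro a ha b hb hab
    have h1 : g (G a) = a := (hG a ha).2
    have h2 : g (G b) = b := (hG b hb).2
    rw [← h1, ← h2, hab]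
  · intro ζ hζ
    obtain ⟨huball, hfu⟩ := hF ζ hζ
    obtain ⟨hvball, hgv⟩ := hG ζ hζ
    set u := F ζ
    set v := G ζ
    -- c*(u - v) = (g v - f v) + ((f v - c*v) - (f u - c*u))
    have hkey : (c:ℂ)*(u - v) = (g v - f v) + ((f v - c*v) - (f u - c*u)) := by
      rw [hfu, hgv]; ring
    have h1 : ‖g v - f v‖ < ε := by
      have := hfg v (hsubR hvball)
      rwa [norm_sub_rev] at this
    have h2 : ‖(f v - c*v) - (f u - c*u)‖ ≤ c/2 * ‖v - u‖ :=
      hlipf v hvball u huball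
    have hcnorm : ‖(c:ℂ)‖ = c := by
      rw [Complex.norm_real, Real.norm_of_nonneg hc.le]
    have h3 : c * ‖u - v‖ ≤ ε + c/2 * ‖u - v‖ := by
      calc c * ‖u - v‖ = ‖(c:ℂ)*(u - v)‖ := by rw [norm_mul, hcnorm]
        _ ≤ ‖g v - f v‖ + ‖(f v - c*v) - (f u - c*u)‖ := by
            rw [hkey]; exact norm_add_le _ _
        _ ≤ ε + c/2 * ‖v - u‖ := add_le_add h1.le h2
        _ = ε + c/2 * ‖u - v‖ := by rw [norm_sub_rev]
    have h4 : c/2 * ‖u - v‖ ≤ ε := by linarith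
    -- conclude ‖u - v‖ ≤ 2/c * ε
    calc ‖u - v‖ = 2/c * (c/2 * ‖u - v‖) := by
          rw [← mul_assoc, div_mul_div_comm, mul_comm (2:ℝ) c, div_self (by positivity : c*2 ≠ 0), one_mul]
      _ ≤ 2/c * ε := by
          apply mul_le_mul_of_nonneg_left h4 (by positivity)
      _ = 2/c * ε := rfl
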